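/- Let P be a finite interval order with a fixed representation, let Q be the subposet on the unit-length intervals partitioned into antichains A_1,...,A_t by successively removing minimal elements, let p_i be the minimum right endpoint among intervals in A_i, and partition the length-0 intervals into sets D_0,...,D_t according to location relative to the p_i (D_0: c ≤ p_1; D_i: p_i < c ≤ p_{i+1} for 1 ≤ i ≤ t-1; D_t: c > p_t). Then A_{i+2} > D_i for 0 ≤ i ≤ t-2, D_i > A_{i-1} for 2 ≤ i ≤ t, and A_j > A_i whenever j ≥ i+2. -/
import Mathlib


/-- What remains of the subset `Q` of a poset after `n` rounds of removing the
minimal elements. -/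
def rest {α : Type*} [PartialOrder α] (Q : Set α) : ℕ → Set α
  | 0 => Q
  | n + 1 => {x ∈ rest Q n | ∃ y ∈ rest Q n, y < x}

/-- The `n`-th antichain (0-indexed) in the partition of `Q` obtained by
successively removing minimal elements. -/
def layer {α : Type*} [PartialOrder α] (Q : Set α) (n : ℕ) : Set α :=
  {x ∈ rest Q n | ∀ y ∈ rest Q n, ¬ y < x}

/-- For a finite interval order with a representation by closed intervals of
lengths 0 and 1: with `Q` the unit-interval elements partitioned into antichains
`layer Q 0, …, layer Q (t-1)` (paper's `A₁, …, A_t`), `p i` the least right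
endpoint in `layer Q i`, and the length-0 elements partitioned into
`D 0, …, D t` by position relative to the `p i`, we have: `A_{i+2} > D_i`,
`D_i > A_{i-1}`, and `A_j > A_i` whenever `j ≥ i + 2`. -/
theorem stmt_17 {α : Type*} [Fintype α] [PartialOrder α]
    (l g : α → ℝ) (hlen : ∀ x, g x - l x = 0 ∨ g x - l x = 1)
    (hrep : ∀ x y : α, x < y ↔ g x < l y)
    (Q : Set α) (hQ : Q = {x | g x - l x = 1})
    (t : ℕ) (ht : ∀ i, (layer Q i).Nonempty ↔ i < t)
    (p : ℕ → ℝ) (hp : ∀ i < t, IsLeast (g '' layer Q i) (p i))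
    (D : ℕ → Set α)
    (hD0 : D 0 = {x | g x - l x = 0 ∧ g x ≤ p 0})
    (hDmid : ∀ i, 1 ≤ i → i ≤ t - 1 →
      D i = {x | g x - l x = 0 ∧ p (i - 1) < g x ∧ g x ≤ p i})
    (hDt : D t = {x | g x - l x = 0 ∧ p (t - 1) < g x}) :
    (∀ i ≤ t - 2, ∀ a ∈ layer Q (i + 1), ∀ d ∈ D i, d < a) ∧
    (∀ i, 2 ≤ i → i ≤ t → ∀ d ∈ D i, ∀ a ∈ layer Q (i - 2), a < d) ∧
    (∀ i j : ℕ, i + 2 ≤ j → j < t → ∀ x ∈ layer Q i, ∀ y ∈ layer Q j, x < y) := by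
  classical
  have hwf : WellFoundedLT α := Finite.to_wellFoundedLT
  have hrestQ : ∀ n, rest Q n ⊆ Q := by
    intro n
    induction n with
    | zero => exact fun x hx => hx
    | succ n ih => exact fun x hx => ih hx.1
  have hlayQ : ∀ n, layer Q n ⊆ rest Q n := fun n x hx => hx.1
  have hunit : ∀ x ∈ Q, g x = l x + 1 := by
    intro x hx
    rw [hQ] at hx
    have : g x - l x = 1 := hx
    linarith
  have L0 : ∀ n, ∀ y ∈ rest Q n, ∃ z ∈ layer Q n, z ≤ y := by
    intro n y
    induction y using WellFoundedLT.induction with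
    | _ y ih =>
      intro hy
      by_cases h : y ∈ layer Q n
      · exact ⟨y, h, le_refl y⟩
      · simp only [layer, Set.mem_setOf_eq] at h
        push_neg at h
        obtain ⟨w, hw, hwy⟩ := h hy
        obtain ⟨z, hz, hzw⟩ := ih w hwy hw
        exact ⟨z, hz, hzw.trans hwy.le⟩
  have L1 : ∀ n x, x ∈ rest Q (n + 1) → ∃ y ∈ layer Q n, y < x := by
    intro n x hx
    obtain ⟨hx1, w, hw, hwx⟩ := hx
    obtain ⟨z, hz, hzw⟩ := L0 n w hw
    exact ⟨z, hz, lt_of_le_of_lt hzw hwx⟩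
  have L2 : ∀ n x, x ∈ rest Q (n + 1) → p n < l x := by
    intro n x hx
    obtain ⟨y, hy, hyx⟩ := L1 n x hx
    have hnt : n < t := (ht n).mp ⟨y, hy⟩
    have hle := (hp n hnt).2 (Set.mem_image_of_mem g hy)
    have hlt := (hrep y x).mp hyx
    linarith
  have L3 : ∀ n, n < t → ∀ x ∈ layer Q n, l x ≤ p n := by
    intro n hn x hx
    obtain ⟨b, hb, hgb⟩ := (hp n hn).1
    have hnlt := hx.2 b hb.1
    rw [hrep] at hnlt
    have := not_lt.mp hnlt
    linarith
  have L4 : ∀ n, n + 1 < t → p n + 1 < p (n + 1) := by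
    intro n hn
    obtain ⟨x, hx, hgx⟩ := (hp (n + 1) hn).1
    have h2 := L2 n x hx.1
    have hu := hunit x (hrestQ _ hx.1)
    linarith
  have L5 : ∀ n, n < t → ∀ m ≤ n, p m ≤ p n := by
    intro n
    induction n with
    | zero => intro _ m hm; simp [Nat.le_zero.mp hm]
    | succ n ih =>
      intro hnt m hm
      rcases Nat.le_succ_iff.mp hm with h | h
      · have h1 := ih (lt_trans (Nat.lt_succ_self n) hnt) m h
        have h2 := L4 n hnt
        linarith
      · subst h
        exact le_refl _
  refine ⟨?_, ?_, ?_⟩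
  · intro i hi a ha d hd
    have h2 := L2 i a (hlayQ _ ha)
    have hgd : g d ≤ p i := by
      rcases Nat.eq_zero_or_pos i with h0 | h1
      · subst h0; rw [hD0] at hd; exact hd.2
      · have hit : i ≤ t - 1 := by omega
        rw [hDmid i h1 hit] at hd
        exact hd.2.2
    exact (hrep d a).mpr (by linarith)
  · intro i h2i hit d hd a ha
    have hi1t : i - 1 < t := by omega
    have hi2t : i - 2 < t := by omega
    have hd0 : g d - l d = 0 ∧ p (i - 1) < g d := by
      rcases eq_or_lt_of_le hit with h | h
      · rw [h, hDt] at hd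
        rw [h]
        exact hd
      · rw [hDmid i (by omega) (by omega)] at hd
        exact ⟨hd.1, hd.2.1⟩
    have hla : l a ≤ p (i - 2) := L3 _ hi2t a ha
    have hga : g a = l a + 1 := hunit a (hrestQ _ (hlayQ _ ha))
    have h4 := L4 (i - 2) (by omega : i - 2 + 1 < t)
    rw [show i - 2 + 1 = i - 1 from by omega] at h4
    have := hd0.1
    have := hd0.2
    exact (hrep a d).mpr (by linarith)
  · intro i j hij hjt x hx y hy
    have hgx : g x = l x + 1 := hunit x (hrestQ _ (hlayQ _ hx))
    have hlx : l x ≤ p i := L3 i (by omega) x hx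
    have hy' : y ∈ rest Q (j - 1 + 1) := by
      rw [show j - 1 + 1 = j from by omega]; exact hlayQ _ hy
    have h2 := L2 (j - 1) y hy'
    have h4 := L4 i (by omega : i + 1 < t)
    have h5 := L5 (j - 1) (by omega) (i + 1) (by omega)
    exact (hrep x y).mpr (by linarith)
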